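/- In the polynomial ring R = ℚ[x11, x22, x21, x12, x23, x13, x14, x24], the ideal Q3 generated by x12, x22, and x23*x14 − x13*x24 is a prime ideal. -/

import Mathlib

open MvPolynomial

noncomputable section

abbrev R : Type := MvPolynomial (Fin 8) ℚ

def x11 : R := X 0
def x22 : R := X 1
def x21 : R := X 2
def x12 : R := X 3
def x23 : R := X 4
def x13 : R := X 5
def x14 : R := X 6
def x24 : R := X 7

def I : Ideal R :=
  Ideal.span {x11 * x22 - x21 * x12, x12 * x23 - x22 * x13, x13 * x24 - x23 * x14}

def Q1 : Ideal R :=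
  Ideal.span {x23 * x14 - x13 * x24, x21 * x14 - x11 * x24, x22 * x14 - x12 * x24,
    x12 * x23 - x22 * x13, x11 * x23 - x21 * x13, x11 * x22 - x21 * x12}

def Q2 : Ideal R := Ideal.span {x13, x23, x11 * x22 - x21 * x12}

def Q3 : Ideal R := Ideal.span {x12, x22, x23 * x14 - x13 * x24}

/-- Key generic lemma: if `g` sends each variable either to `0` or to a variable that `rename j`
maps back, then `p - rename j (aeval g p)` lies in any ideal containing the killed variables. -/
lemma sub_rename_aeval_mem {n m : ℕ} (g : Fin n → MvPolynomial (Fin m) ℚ)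
    (j : Fin m → Fin n) (hg : ∀ i, g i ≠ 0 → rename j (g i) = X i)
    (J : Ideal (MvPolynomial (Fin n) ℚ)) (hJ : ∀ i, g i = 0 → X i ∈ J)
    (p : MvPolynomial (Fin n) ℚ) : p - rename j (aeval g p) ∈ J := by
  induction p using MvPolynomial.induction_on with
  | C a => simp
  | add p q hp hq => simpa [map_add, sub_add_sub_comm] using J.add_mem hp hq
  | mul_X p i hp =>
    by_cases h : g i = 0
    · simpa [h] using J.mul_mem_left p (hJ i h)
    · have h2 : rename j (aeval g (p * X i)) = rename j (aeval g p) * X i := by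
        simp [hg i h]
      rw [h2]
      simpa [sub_mul] using J.mul_mem_right (X i) hp

lemma prime_X0_five : Prime (X 0 : MvPolynomial (Fin 5) ℚ) := by
  have hker : Ideal.span {(X 0 : MvPolynomial (Fin 5) ℚ)} =
      RingHom.ker (aeval (R := ℚ) (Fin.cases 0 X : Fin 5 → MvPolynomial (Fin 4) ℚ)).toRingHom := by
    apply le_antisymm
    · rw [Ideal.span_le]
      intro x hx
      simp only [Set.mem_singleton_iff] at hx
      subst hx
      simp [RingHom.mem_ker]
    · intro p hp
      rw [RingHom.mem_ker] at hp
      have := sub_rename_aeval_mem (Fin.cases 0 X) Fin.succ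
        (by
          intro i hi
          induction i using Fin.cases with
          | zero => simp at hi
          | succ k => simp)
        (Ideal.span {(X 0 : MvPolynomial (Fin 5) ℚ)})
        (by
          intro i hi
          induction i using Fin.cases with
          | zero => exact Ideal.subset_span rfl
          | succ k => simp at hi)
        p
      have hp' : (aeval (Fin.cases 0 X : Fin 5 → MvPolynomial (Fin 4) ℚ)) p = 0 := hp
      rw [hp', map_zero, sub_zero] at this
      exact this
  rw [← Ideal.span_singleton_prime (X_ne_zero 0)]
  rw [hker]
  exact RingHom.ker_isPrime _

lemma X_not_dvd_X {m : ℕ} {a b : Fin m} (hab : b ≠ a) :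
    ¬ (X a : MvPolynomial (Fin m) ℚ) ∣ X b := by
  rintro ⟨d, hd⟩
  have := congrArg (aeval (fun k : Fin m => if k = a then (0 : ℚ) else 1)) hd
  simp [hab] at this

lemma irr_q : Irreducible (Polynomial.C (X 0 : MvPolynomial (Fin 5) ℚ) * Polynomial.X
    - Polynomial.C (X 1 * X 2)) := by
  set A := MvPolynomial (Fin 5) ℚ
  set q : Polynomial A := Polynomial.C (X 0 : A) * Polynomial.X - Polynomial.C (X 1 * X 2) with hq
  have hdeg : q.natDegree = 1 := by
    rw [hq, sub_eq_add_neg, ← Polynomial.C_neg]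
    rw [Polynomial.natDegree_add_C, Polynomial.natDegree_C_mul_X _ (X_ne_zero 0)]
  have hq0 : q ≠ 0 := fun h => by simp [h] at hdeg
  have key : ∀ u v : Polynomial A, q = u * v → u.natDegree = 0 → IsUnit u := by
    intro u v huv hu
    obtain ⟨c, rfl⟩ : ∃ c, u = Polynomial.C c :=
      ⟨u.coeff 0, Polynomial.eq_C_of_natDegree_eq_zero hu⟩
    have hdvd : Polynomial.C c ∣ q := ⟨v, huv⟩
    rw [Polynomial.C_dvd_iff_dvd_coeff] at hdvd
    have h1 : c ∣ (X 0 : A) := by have := hdvd 1; simpa [hq] using this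
    have h0 : c ∣ (X 1 * X 2 : A) := by
      have := hdvd 0
      simp only [hq, Polynomial.coeff_sub, Polynomial.coeff_C_mul, Polynomial.coeff_X_zero,
        mul_zero, Polynomial.coeff_C_zero, zero_sub, dvd_neg] at this
      exact dvd_neg.mp this
    obtain ⟨d, hd⟩ := h1
    rcases prime_X0_five.irreducible.isUnit_or_isUnit hd with hc | hdu
    · exact Polynomial.isUnit_C.mpr hc
    · exfalso
      have hX0c : (X 0 : A) ∣ c := by
        obtain ⟨e, he⟩ := hdu.exists_left_inv
        exact ⟨e, by rw [hd, mul_assoc, mul_comm d e, he, mul_one]⟩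
      rcases (prime_X0_five.2.2 _ _ (hX0c.trans h0)) with h | h
      · exact X_not_dvd_X (by decide) h
      · exact X_not_dvd_X (by decide) h
  constructor
  · intro hu
    have := Polynomial.natDegree_eq_zero_of_isUnit hu
    omega
  · intro u v huv
    have hu0 : u ≠ 0 := fun h => hq0 (by simp [huv, h])
    have hv0 : v ≠ 0 := fun h => hq0 (by simp [huv, h])
    have : u.natDegree + v.natDegree = 1 := by
      rw [← Polynomial.natDegree_mul hu0 hv0, ← huv, hdeg]
    rcases Nat.eq_zero_or_pos u.natDegree with h | h
    · exact Or.inl (key u v huv h)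
    · exact Or.inr (key v u (by rw [huv, mul_comm]) (by omega))

lemma prime_q6 : Prime (X 0 * X 1 - X 2 * X 3 : MvPolynomial (Fin 6) ℚ) := by
  have e := (finSuccEquiv ℚ 5)
  rw [← MulEquiv.prime_iff (finSuccEquiv ℚ 5).toRingEquiv.toMulEquiv]
  have h1 : (1 : Fin 6) = (0 : Fin 5).succ := rfl
  have h2 : (2 : Fin 6) = (1 : Fin 5).succ := rfl
  have h3 : (3 : Fin 6) = (2 : Fin 5).succ := rfl
  have heq : (finSuccEquiv ℚ 5).toRingEquiv.toMulEquiv (X 0 * X 1 - X 2 * X 3 : MvPolynomial (Fin 6) ℚ)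
      = Polynomial.C (X 0 : MvPolynomial (Fin 5) ℚ) * Polynomial.X - Polynomial.C (X 1 * X 2) := by
    show (finSuccEquiv ℚ 5) (X 0 * X 1 - X 2 * X 3 : MvPolynomial (Fin 6) ℚ) = _
    rw [map_sub, map_mul, map_mul, h1, h2, h3, finSuccEquiv_X_zero, finSuccEquiv_X_succ,
      finSuccEquiv_X_succ, finSuccEquiv_X_succ, Polynomial.C_mul]
    ring
  rw [heq]
  exact UniqueFactorizationMonoid.irreducible_iff_prime.mp irr_q

def gQ3 : Fin 8 → MvPolynomial (Fin 6) ℚ := fun i =>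
    if i = 0 then X 4 else if i = 2 then X 5 else if i = 4 then X 0 else
    if i = 5 then X 2 else if i = 6 then X 1 else if i = 7 then X 3 else 0

def preQ3 : Fin 6 → Fin 8 := fun i =>
    if i = 0 then 4 else if i = 1 then 6 else if i = 2 then 5 else
    if i = 3 then 7 else if i = 4 then 0 else 2

theorem Q3_isPrime : Q3.IsPrime := by
  classical
  have hsec : ∀ i, gQ3 i ≠ 0 → rename preQ3 (gQ3 i) = X i := by
    intro i hi
    fin_cases i <;> simp_all [gQ3, preQ3]
  have hJ : ∀ i, gQ3 i = 0 → X i ∈ Q3 := by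
    intro i hi
    fin_cases i
    all_goals first
      | exact Ideal.subset_span (Set.mem_insert_iff.mpr (Or.inl rfl))
      | exact Ideal.subset_span
          (Set.mem_insert_iff.mpr (Or.inr (Set.mem_insert_iff.mpr (Or.inl rfl))))
      | (exfalso; revert hi; simp [gQ3])
  have hsurj : Function.Surjective (aeval gQ3 : R →ₐ[ℚ] MvPolynomial (Fin 6) ℚ) := by
    intro s
    induction s using MvPolynomial.induction_on with
    | C a => exact ⟨C a, by simp⟩
    | add p q hp hq =>
      obtain ⟨p', hp⟩ := hp; obtain ⟨q', hq⟩ := hq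
      exact ⟨p' + q', by rw [map_add, hp, hq]⟩
    | mul_X p i hp =>
      obtain ⟨p', hp⟩ := hp
      refine ⟨p' * X (preQ3 i), ?_⟩
      rw [map_mul, hp]
      congr 1
      fin_cases i <;> simp [gQ3, preQ3]
  have hqgen : aeval gQ3 (x23 * x14 - x13 * x24) =
      (X 0 * X 1 - X 2 * X 3 : MvPolynomial (Fin 6) ℚ) := by
    simp [x23, x14, x13, x24, gQ3]
  have hq' : Prime (X 0 * X 1 - X 2 * X 3 : MvPolynomial (Fin 6) ℚ) := prime_q6
  haveI hP : (Ideal.span {(X 0 * X 1 - X 2 * X 3 : MvPolynomial (Fin 6) ℚ)}).IsPrime :=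
    (Ideal.span_singleton_prime hq'.ne_zero).mpr hq'
  have hmap : Q3 = Ideal.comap (aeval gQ3 : R →ₐ[ℚ] MvPolynomial (Fin 6) ℚ).toRingHom
      (Ideal.span {(X 0 * X 1 - X 2 * X 3 : MvPolynomial (Fin 6) ℚ)}) := by
    apply le_antisymm
    · rw [Q3, Ideal.span_le]
      rintro x hx
      simp only [Set.mem_insert_iff, Set.mem_singleton_iff] at hx
      rcases hx with rfl | rfl | rfl
      · simp only [SetLike.mem_coe, Ideal.mem_comap]
        show aeval gQ3 x12 ∈ _
        simp [x12, gQ3]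
      · simp only [SetLike.mem_coe, Ideal.mem_comap]
        show aeval gQ3 x22 ∈ _
        simp [x22, gQ3]
      · simp only [SetLike.mem_coe, Ideal.mem_comap]
        show aeval gQ3 (x23 * x14 - x13 * x24) ∈ _
        rw [hqgen]
        exact Ideal.subset_span rfl
    · intro p hp
      rw [Ideal.mem_comap] at hp
      have hp' : (aeval gQ3) p ∈
          Ideal.span {(X 0 * X 1 - X 2 * X 3 : MvPolynomial (Fin 6) ℚ)} := hp
      rw [Ideal.mem_span_singleton] at hp'
      obtain ⟨r, hr⟩ := hp'
      obtain ⟨r0, hr0⟩ := hsurj r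
      have hker : aeval gQ3 (p - (x23 * x14 - x13 * x24) * r0) = 0 := by
        rw [map_sub, map_mul, hr0, hqgen, hr, sub_self]
      have hmem := sub_rename_aeval_mem gQ3 preQ3 hsec Q3 hJ (p - (x23 * x14 - x13 * x24) * r0)
      rw [hker, map_zero, sub_zero] at hmem
      have hq3 : (x23 * x14 - x13 * x24) * r0 ∈ Q3 :=
        Ideal.mul_mem_right _ _ (Ideal.subset_span (Set.mem_insert_iff.mpr (Or.inr
          (Set.mem_insert_iff.mpr (Or.inr rfl)))))
      simpa using Q3.add_mem hmem hq3
  rw [hmap]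
  exact Ideal.IsPrime.comap _

end
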